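/- For every integer R ≥ 2, the density of coprime tuples converges: lim_{M→∞} |C(M,R)| / M^R = 1/ζ(R). -/

import Mathlib

open Finset ArithmeticFunction Filter
open scoped ArithmeticFunction.Moebius

/-- `coprimeTuples M R` is the set `C(M,R)` of `R`-tuples `(c₁,…,c_R)` of integers
with `1 ≤ cᵣ ≤ M` for every `r` and `gcd(c₁,…,c_R) = 1`. -/
def coprimeTuples (M R : ℕ) : Finset (Fin R → ℕ) :=
  (Fintype.piFinset fun _ : Fin R => Finset.Icc 1 M).filter
    fun c => Finset.univ.gcd c = 1

/-- `ζ(R) = ∑_{n=1}^∞ n^{-R}`. -/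
noncomputable def zetaVal (R : ℕ) : ℝ := ∑' n : ℕ, 1 / ((n : ℝ) + 1) ^ R

lemma filter_dvd_Icc (M d : ℕ) : ((Finset.Icc 1 M).filter (d ∣ ·)).card = M / d := by
  rw [show Finset.Icc 1 M = Finset.Ioc 0 M from rfl]
  exact Nat.Ioc_filter_dvd_card_eq_div M d

lemma card_coprimeTuples (M R : ℕ) (hR : 0 < R) :
    ((coprimeTuples M R).card : ℤ) =
      ∑ d ∈ Finset.Icc 1 M, μ d * ((M / d : ℕ) : ℤ) ^ R := by
  classical
  have key : ∀ c ∈ Fintype.piFinset fun _ : Fin R => Finset.Icc 1 M,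
      (if Finset.univ.gcd c = 1 then (1 : ℤ) else 0) =
        ∑ d ∈ Finset.Icc 1 M, if d ∣ Finset.univ.gcd c then μ d else 0 := by
    intro c hc
    simp only [Fintype.mem_piFinset, Finset.mem_Icc] at hc
    set g := Finset.univ.gcd c with hg
    have hi : (⟨0, hR⟩ : Fin R) ∈ (Finset.univ : Finset (Fin R)) := Finset.mem_univ _
    have hgd : g ∣ c ⟨0, hR⟩ := Finset.gcd_dvd hi
    have hc0 := hc ⟨0, hR⟩
    have hgpos : 1 ≤ g := Nat.one_le_iff_ne_zero.2 fun h => by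
      have := Nat.eq_zero_of_zero_dvd (h ▸ hgd)
      omega
    have hgM : g ≤ M := le_trans (Nat.le_of_dvd (by omega) hgd) hc0.2
    rw [Finset.sum_ite, Finset.sum_const_zero, add_zero]
    have hset : (Finset.Icc 1 M).filter (· ∣ g) = g.divisors := by
      ext d
      simp only [Finset.mem_filter, Finset.mem_Icc, Nat.mem_divisors]
      constructor
      · rintro ⟨-, hd⟩; exact ⟨hd, by omega⟩
      · rintro ⟨hd, -⟩
        exact ⟨⟨Nat.one_le_iff_ne_zero.2 fun h => by simp [h] at hd; omega,
          le_trans (Nat.le_of_dvd (by omega) hd) hgM⟩, hd⟩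
    rw [hset]
    have := (congrArg (fun f : ArithmeticFunction ℤ => f g) moebius_mul_coe_zeta)
    simpa only [coe_mul_zeta_apply, one_apply] using this.symm
  rw [coprimeTuples, Finset.card_filter]
  push_cast
  rw [Finset.sum_congr rfl key, Finset.sum_comm]
  refine Finset.sum_congr rfl fun d hd => ?_
  rw [Finset.sum_ite, Finset.sum_const_zero, add_zero, Finset.sum_const, nsmul_eq_mul,
    mul_comm]
  congr 1
  have : (Fintype.piFinset fun _ : Fin R => Finset.Icc 1 M).filter
      (fun c => d ∣ Finset.univ.gcd c) =
      Fintype.piFinset fun _ : Fin R => (Finset.Icc 1 M).filter (d ∣ ·) := by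
    ext c
    simp only [Finset.mem_filter, Fintype.mem_piFinset, Finset.dvd_gcd_iff,
      Finset.mem_univ, forall_const]
    exact (forall_and ..).symm
  rw [this, Fintype.card_piFinset]
  simp [filter_dvd_Icc]

lemma summable_one_div_pow (R : ℕ) (hR : 2 ≤ R) :
    Summable fun n : ℕ => 1 / (n : ℝ) ^ R :=
  Real.summable_one_div_nat_pow.2 hR

lemma zetaVal_eq (R : ℕ) (hR : 2 ≤ R) :
    zetaVal R = ∑' n : ℕ, 1 / (n : ℝ) ^ R := by
  rw [Summable.tsum_eq_zero_add (summable_one_div_pow R hR)]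
  simp [zetaVal, zero_pow (by omega : R ≠ 0)]

lemma summable_moebius_div (R : ℕ) (hR : 2 ≤ R) :
    Summable fun n : ℕ => (μ n : ℝ) * (1 / (n : ℝ)) ^ R := by
  refine Summable.of_norm_bounded (summable_one_div_pow R hR) fun n => ?_
  rw [norm_mul, one_div, inv_pow, ← one_div]
  have h1 : ‖(μ n : ℝ)‖ ≤ 1 := by
    rw [Real.norm_eq_abs, ← Int.cast_abs]
    exact_mod_cast (abs_moebius_le_one : |μ n| ≤ 1)
  have h2 : ‖1 / (n : ℝ) ^ R‖ = 1 / (n : ℝ) ^ R := Real.norm_of_nonneg (by positivity)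
  calc ‖(μ n : ℝ)‖ * ‖1 / (n : ℝ) ^ R‖ ≤ 1 * ‖1 / (n : ℝ) ^ R‖ := by
        gcongr
    _ = 1 / (n : ℝ) ^ R := by rw [one_mul, h2]

lemma tsum_moebius_mul_zeta (R : ℕ) (hR : 2 ≤ R) :
    (∑' n : ℕ, (μ n : ℝ) * (1 / (n : ℝ)) ^ R) * zetaVal R = 1 := by
  have hs : 1 < (R : ℂ).re := by simp; exact_mod_cast by omega
  have h := LSeries_one_mul_Lseries_moebius (s := (R : ℂ)) hs
  have hμ : LSeries (fun n => (μ n : ℂ)) (R : ℂ) =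
      ((∑' n : ℕ, (μ n : ℝ) * (1 / (n : ℝ)) ^ R : ℝ) : ℂ) := by
    rw [Complex.ofReal_tsum]
    refine tsum_congr fun n => ?_
    rcases eq_or_ne n 0 with rfl | hn
    · simp [LSeries.term, zero_pow (by omega : R ≠ 0)]
    · rw [LSeries.term_of_ne_zero hn, Complex.cpow_natCast]
      push_cast
      rw [div_eq_mul_inv, one_div, inv_pow]
  have hζ : LSeries 1 (R : ℂ) = ((zetaVal R : ℝ) : ℂ) := by
    rw [zetaVal_eq R hR, Complex.ofReal_tsum]
    refine tsum_congr fun n => ?_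
    rcases eq_or_ne n 0 with rfl | hn
    · simp [LSeries.term, zero_pow (by omega : R ≠ 0)]
    · rw [LSeries.term_of_ne_zero hn, Complex.cpow_natCast]
      push_cast
      simp
  rw [hμ, hζ, ← Complex.ofReal_mul] at h
  exact_mod_cast mul_comm (zetaVal R) _ ▸ h

lemma tendsto_floor_div (n : ℕ) (hn : 0 < n) :
    Tendsto (fun M : ℕ => ((M / n : ℕ) : ℝ) / (M : ℝ)) atTop (nhds (1 / (n : ℝ))) := by
  rw [tendsto_iff_dist_tendsto_zero]
  apply squeeze_zero' (Eventually.of_forall fun M => dist_nonneg)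
    (g := fun M : ℕ => 1 / (M : ℝ))
  · filter_upwards [eventually_ge_atTop 1] with M hM
    have hM0 : (0 : ℝ) < M := by exact_mod_cast hM
    have hn0 : (0 : ℝ) < n := by exact_mod_cast hn
    have h1 : (M : ℝ) = n * ((M / n : ℕ) : ℝ) + ((M % n : ℕ) : ℝ) := by
      exact_mod_cast (Nat.div_add_mod M n).symm
    have h2 : ((M % n : ℕ) : ℝ) < n := by exact_mod_cast Nat.mod_lt M hn
    rw [Real.dist_eq, div_sub_div _ _ hM0.ne' hn0.ne']
    have hnum : ((M / n : ℕ) : ℝ) * n - M * 1 = -((M % n : ℕ) : ℝ) := by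
      rw [h1]; ring
    rw [hnum, abs_div, abs_neg, abs_of_nonneg (by positivity : (0:ℝ) ≤ ((M % n : ℕ) : ℝ)),
      abs_of_pos (by positivity : (0:ℝ) < (M:ℝ) * n)]
    calc ((M % n : ℕ) : ℝ) / ((M : ℝ) * n) ≤ (n : ℝ) / ((M : ℝ) * n) := by
          gcongr
      _ = 1 / (M : ℝ) := by field_simp
  · exact tendsto_one_div_atTop_nhds_zero_nat

/-- For every integer `R ≥ 2`, `lim_{M→∞} |C(M,R)| / M^R = 1/ζ(R)`. -/
theorem coprimeTuples_density (R : ℕ) (hR : 2 ≤ R) :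
    Filter.Tendsto (fun M : ℕ => ((coprimeTuples M R).card : ℝ) / (M : ℝ) ^ R)
      Filter.atTop (nhds (1 / zetaVal R)) := by
  have hR0 : R ≠ 0 := by omega
  set F : ℕ → ℕ → ℝ :=
    fun M d => (μ (d + 1) : ℝ) * (((M / (d + 1) : ℕ) : ℝ) / (M : ℝ)) ^ R with hF
  set g : ℕ → ℝ := fun d => (μ (d + 1) : ℝ) * (1 / ((d + 1 : ℕ) : ℝ)) ^ R with hg
  -- the bound
  have hbound : Summable fun d : ℕ => (1 / ((d + 1 : ℕ) : ℝ)) ^ R := by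
    have h := (summable_nat_add_iff 1).2 (summable_one_div_pow R hR)
    refine h.congr fun n => ?_
    rw [div_pow, one_pow]
  -- pointwise limits
  have hlim : ∀ d : ℕ, Tendsto (fun M => F M d) atTop (nhds (g d)) := fun d =>
    ((tendsto_floor_div (d + 1) (Nat.succ_pos d)).pow R).const_mul _
  -- domination
  have hdom : ∀ M d : ℕ, ‖F M d‖ ≤ (1 / ((d + 1 : ℕ) : ℝ)) ^ R := by
    intro M d
    have hx0 : (0 : ℝ) ≤ ((M / (d + 1) : ℕ) : ℝ) / (M : ℝ) := by positivity
    have hx1 : ((M / (d + 1) : ℕ) : ℝ) / (M : ℝ) ≤ 1 / ((d + 1 : ℕ) : ℝ) := by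
      rcases Nat.eq_zero_or_pos M with rfl | hM
      · simp; positivity
      · have hM0 : (0 : ℝ) < M := by exact_mod_cast hM
        have h1 : ((M / (d + 1) : ℕ) : ℝ) ≤ (M : ℝ) / ((d + 1 : ℕ) : ℝ) :=
          Nat.cast_div_le
        calc ((M / (d + 1) : ℕ) : ℝ) / (M : ℝ)
            ≤ ((M : ℝ) / ((d + 1 : ℕ) : ℝ)) / (M : ℝ) := by gcongr
          _ = 1 / ((d + 1 : ℕ) : ℝ) := by
              rw [div_right_comm, div_self hM0.ne']
    have hμ1 : ‖(μ (d + 1) : ℝ)‖ ≤ 1 := by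
      rw [Real.norm_eq_abs, ← Int.cast_abs]
      exact_mod_cast (abs_moebius_le_one : |μ (d + 1)| ≤ 1)
    rw [hF, norm_mul]
    calc ‖(μ (d + 1) : ℝ)‖ * ‖(((M / (d + 1) : ℕ) : ℝ) / (M : ℝ)) ^ R‖
        ≤ 1 * (1 / ((d + 1 : ℕ) : ℝ)) ^ R := by
          apply mul_le_mul hμ1 ?_ (norm_nonneg _) zero_le_one
          rw [norm_pow, Real.norm_of_nonneg hx0]
          exact pow_le_pow_left₀ hx0 hx1 R
      _ = (1 / ((d + 1 : ℕ) : ℝ)) ^ R := one_mul _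
  have htend := tendsto_tsum_of_dominated_convergence hbound hlim
    (Eventually.of_forall hdom)
  -- identify the limit
  have hgsum : (∑' d, g d) = 1 / zetaVal R := by
    have hsum := summable_moebius_div R hR
    have h0 : (∑' n : ℕ, (μ n : ℝ) * (1 / (n : ℝ)) ^ R) = ∑' d, g d := by
      rw [Summable.tsum_eq_zero_add hsum]
      simp [hg]
    have hmul := tsum_moebius_mul_zeta R hR
    rw [h0] at hmul
    exact eq_one_div_of_mul_eq_one_left hmul
  rw [← hgsum]
  refine Tendsto.congr' ?_ htend
  filter_upwards [eventually_ge_atTop 1] with M hM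
  have hM0 : (0 : ℝ) < M := by exact_mod_cast hM
  -- the tsum is a finite sum
  have hvanish : ∀ d ∉ Finset.range M, F M d = 0 := by
    intro d hd
    rw [Finset.mem_range, not_lt] at hd
    have : M / (d + 1) = 0 := Nat.div_eq_of_lt (by omega)
    rw [hF]
    simp [this, zero_pow hR0]
  have hcard := card_coprimeTuples M R (by omega)
  have hcardR : ((coprimeTuples M R).card : ℝ) =
      ∑ n ∈ Finset.Icc 1 M, (μ n : ℝ) * ((M / n : ℕ) : ℝ) ^ R := by
    have := congrArg (fun z : ℤ => (z : ℝ)) hcard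
    push_cast at this
    exact this
  have heq : ((coprimeTuples M R).card : ℝ) / (M : ℝ) ^ R = ∑' d, F M d := by
    rw [tsum_eq_sum hvanish, hcardR, Finset.sum_div, ← Finset.Ico_add_one_right_eq_Icc,
      Finset.sum_Ico_eq_sum_range]
    refine Finset.sum_congr rfl fun i hi => ?_
    rw [add_comm 1 i, mul_div_assoc, ← div_pow]
  exact heq.symm
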